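/- arXiv:1704.02294 — 4 statements merged into one kernel-verified Lean document; each statement's English description precedes it below -/
import Mathlib

section
/- The double integral ∫_A (1 - α²)^{-1/2} (1 - β²)^{-1/2} dα dβ over A = { (α, β) : |α| ≤ 1, |β| ≤ 1, |α - β| ≤ 1 } equals π²/2 + 2 ∫_0^1 arcsin(1 - β) / √(1 - β²) dβ. -/
open MeasureTheory Real Set

noncomputable def gg : ℝ → ℝ := fun x => (Real.sqrt (1 - x ^ 2))⁻¹

lemma gg_nonneg (x : ℝ) : 0 ≤ gg x := by
  unfold gg; positivity

lemma gg_zero {x : ℝ} (h : 1 ≤ |x|) : gg x = 0 := by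
  unfold gg
  rw [show Real.sqrt (1 - x ^ 2) = 0 from Real.sqrt_eq_zero'.2 (by nlinarith [sq_abs x]), inv_zero]

lemma gg_meas : Measurable gg := by
  exact (Real.continuous_sqrt.comp (by continuity)).measurable.inv

lemma gg_even (x : ℝ) : gg (-x) = gg x := by unfold gg; ring_nf

lemma gg_integrableOn_Icc : IntegrableOn gg (Icc (-1 : ℝ) 1) := by
  have h1 : IntegrableOn gg (Ioc (-1 : ℝ) 1) := by
    apply intervalIntegral.integrableOn_deriv_of_nonneg
      (Real.continuous_arcsin.continuousOn)
    · intro x hx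
      have := Real.hasDerivAt_arcsin (ne_of_gt hx.1) (ne_of_lt hx.2)
      simpa [gg, one_div] using this
    · intro x hx; exact gg_nonneg x
  rwa [integrableOn_Icc_iff_integrableOn_Ioc]

lemma gg_integrable : Integrable gg := by
  have heq : gg = Set.indicator (Icc (-1 : ℝ) 1) gg := by
    funext x
    by_cases hx : x ∈ Icc (-1 : ℝ) 1
    · rw [Set.indicator_of_mem hx]
    · rw [Set.indicator_of_notMem hx, gg_zero]
      rw [mem_Icc] at hx
      rw [le_abs]
      rcases lt_or_ge x 0 with h | h
      · right; by_contra hc; push_neg at hx hc; linarith [hx (by linarith)]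
      · left; by_contra hc; push_neg at hx hc; linarith [hx (by linarith)]
  rw [heq]
  exact (integrable_indicator_iff measurableSet_Icc).2 gg_integrableOn_Icc

lemma gg_intervalIntegrable (a b : ℝ) : IntervalIntegrable gg volume a b :=
  gg_integrable.intervalIntegrable

lemma gg_integral (a b : ℝ) (ha : -1 ≤ a) (hb : b ≤ 1) (hab : a ≤ b) :
    ∫ x in a..b, gg x = Real.arcsin b - Real.arcsin a := by
  apply intervalIntegral.integral_eq_sub_of_hasDeriv_right_of_le hab
    (Real.continuous_arcsin.continuousOn)
  · intro x hx
    have h1 : x ≠ -1 := ne_of_gt (lt_of_le_of_lt ha hx.1)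
    have h2 : x ≠ 1 := ne_of_lt (lt_of_lt_of_le hx.2 hb)
    have := Real.hasDerivAt_arcsin h1 h2
    exact (by simpa [gg, one_div] using this : HasDerivAt Real.arcsin (gg x) x).hasDerivWithinAt
  · exact gg_intervalIntegrable a b

lemma gg_zero' {t : ℝ} (h : t ≤ -1 ∨ 1 ≤ t) : gg t = 0 := by
  apply gg_zero
  rcases h with h | h
  · rw [abs_of_nonpos (by linarith)]; linarith
  · rw [abs_of_nonneg (by linarith)]; exact h

lemma gg_inner (x : ℝ) (hx : x ∈ Ioo (-1 : ℝ) 1) :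
    ∫ y in Icc (x - 1) (x + 1), gg y
      = Real.arcsin (x + 1) - Real.arcsin (x - 1) := by
  obtain ⟨hx1, hx2⟩ := hx
  set a := x - 1 with ha
  set b := x + 1 with hb
  have hab : a ≤ b := by simp [ha, hb]; linarith
  set a' := max a (-1) with ha'
  set b' := min b 1 with hb'
  have haa' : a ≤ a' := le_max_left _ _
  have hb'b : b' ≤ b := min_le_left _ _
  have ha'b' : a' ≤ b' := by
    apply max_le
    · apply le_min (by linarith) (by simp [ha]; linarith)
    · exact le_min (by simp [hb]; linarith) (by norm_num)
  have key : ∫ y in a..b, gg y = Real.arcsin b' - Real.arcsin a' := by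
    have hsplit1 : ∫ y in a..a', gg y = 0 := by
      rcases le_or_gt a (-1) with h | h
      · have : a' = -1 := max_eq_right h
        rw [this]
        rw [intervalIntegral.integral_congr (g := fun _ => (0 : ℝ))]
        · simp
        · intro t ht
          rw [Set.uIcc_of_le h] at ht
          exact gg_zero' (Or.inl ht.2)
      · have : a' = a := max_eq_left h.le
        rw [this, intervalIntegral.integral_same]
    have hsplit2 : ∫ y in b'..b, gg y = 0 := by
      rcases le_or_gt 1 b with h | h
      · have : b' = 1 := min_eq_right h
        rw [this]
        rw [intervalIntegral.integral_congr (g := fun _ => (0 : ℝ))]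
        · simp
        · intro t ht
          rw [Set.uIcc_of_le h] at ht
          exact gg_zero' (Or.inr ht.1)
      · have : b' = b := min_eq_left h.le
        rw [this, intervalIntegral.integral_same]
    have hmid : ∫ y in a'..b', gg y = Real.arcsin b' - Real.arcsin a' :=
      gg_integral a' b' (le_max_right _ _) (min_le_right _ _) ha'b'
    calc ∫ y in a..b, gg y
        = (∫ y in a..a', gg y) + ∫ y in a'..b, gg y := by
          rw [intervalIntegral.integral_add_adjacent_intervals
            (gg_intervalIntegrable _ _) (gg_intervalIntegrable _ _)]
      _ = (∫ y in a..a', gg y) + ((∫ y in a'..b', gg y) + ∫ y in b'..b, gg y) := by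
          rw [intervalIntegral.integral_add_adjacent_intervals
            (gg_intervalIntegrable a' b') (gg_intervalIntegrable b' b),
            intervalIntegral.integral_add_adjacent_intervals
            (gg_intervalIntegrable a a') (gg_intervalIntegrable a' b)]
      _ = Real.arcsin b' - Real.arcsin a' := by
          rw [hsplit1, hsplit2, hmid]; ring
  have harc_a : Real.arcsin a' = Real.arcsin a := by
    rcases le_or_gt a (-1) with h | h
    · rw [show a' = -1 from max_eq_right h, Real.arcsin_neg_one,
        Real.arcsin_of_le_neg_one h]
    · rw [show a' = a from max_eq_left h.le]
  have harc_b : Real.arcsin b' = Real.arcsin b := by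
    rcases le_or_gt 1 b with h | h
    · rw [show b' = 1 from min_eq_right h, Real.arcsin_one,
        Real.arcsin_of_one_le h]
    · rw [show b' = b from min_eq_left h.le]
  rw [MeasureTheory.integral_Icc_eq_integral_Ioc,
    ← intervalIntegral.integral_of_le hab, key, harc_a, harc_b]

lemma hT_meas : MeasurableSet {p : ℝ × ℝ | |p.1 - p.2| ≤ 1} :=
  measurableSet_le ((continuous_fst.sub continuous_snd).abs.measurable) measurable_const

lemma f_integrable : Integrable (fun p : ℝ × ℝ => gg p.1 * gg p.2) := by
  rw [Measure.volume_eq_prod]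
  exact gg_integrable.mul_prod gg_integrable

lemma fubini_step :
    (∫ p in {p : ℝ × ℝ | |p.1 - p.2| ≤ 1}, gg p.1 * gg p.2)
      = ∫ x, gg x * (Real.arcsin (x + 1) - Real.arcsin (x - 1)) := by
  rw [← integral_indicator hT_meas]
  rw [Measure.volume_eq_prod]
  rw [MeasureTheory.integral_prod _ ((by
    rw [← Measure.volume_eq_prod]
    exact f_integrable.indicator hT_meas) :
    Integrable (Set.indicator {p : ℝ × ℝ | |p.1 - p.2| ≤ 1}
      (fun p : ℝ × ℝ => gg p.1 * gg p.2)) (volume.prod volume))]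
  congr 1
  funext x
  have hrw : (fun y => Set.indicator {p : ℝ × ℝ | |p.1 - p.2| ≤ 1}
      (fun p : ℝ × ℝ => gg p.1 * gg p.2) (x, y))
      = Set.indicator (Icc (x - 1) (x + 1)) (fun y => gg x * gg y) := by
    funext y
    have hmem : (x, y) ∈ {p : ℝ × ℝ | |p.1 - p.2| ≤ 1} ↔ y ∈ Icc (x - 1) (x + 1) := by
      simp only [Set.mem_setOf_eq, Set.mem_Icc, abs_le]
      constructor
      · rintro ⟨h1, h2⟩; constructor <;> linarith
      · rintro ⟨h1, h2⟩; constructor <;> linarith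
    by_cases h : y ∈ Icc (x - 1) (x + 1)
    · rw [Set.indicator_of_mem (hmem.2 h), Set.indicator_of_mem h]
    · rw [Set.indicator_of_notMem (fun hc => h (hmem.1 hc)), Set.indicator_of_notMem h]
  rw [hrw, integral_indicator measurableSet_Icc, MeasureTheory.integral_const_mul]
  by_cases hx : x ∈ Ioo (-1 : ℝ) 1
  · rw [gg_inner x hx]
  · have hg0 : gg x = 0 := by
      apply gg_zero'
      simp only [Set.mem_Ioo, not_and_or, not_lt] at hx
      rcases hx with h | h
      · exact Or.inl h
      · exact Or.inr h
    rw [hg0, zero_mul, zero_mul]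

lemma arcsin_abs_le (t : ℝ) : |Real.arcsin t| ≤ π / 2 :=
  abs_le.2 ⟨Real.neg_pi_div_two_le_arcsin t, Real.arcsin_le_pi_div_two t⟩

lemma h1_integrable : Integrable (fun x : ℝ => Real.arcsin (1 + x) * gg x) :=
  gg_integrable.bdd_mul (c := π / 2)
    ((Real.continuous_arcsin.comp (by continuity)).aestronglyMeasurable)
    (Filter.Eventually.of_forall fun x => by rw [Real.norm_eq_abs]; exact arcsin_abs_le _)

lemma h2_integrable : Integrable (fun x : ℝ => Real.arcsin (1 - x) * gg x) :=
  gg_integrable.bdd_mul (c := π / 2)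
    ((Real.continuous_arcsin.comp (by continuity)).aestronglyMeasurable)
    (Filter.Eventually.of_forall fun x => by rw [Real.norm_eq_abs]; exact arcsin_abs_le _)

lemma restrict01 (F : ℝ → ℝ) (h : ∀ x, x ∉ Icc (-1 : ℝ) 1 → F x = 0) :
    ∫ x, F x = ∫ x in (-1 : ℝ)..1, F x := by
  rw [intervalIntegral.integral_of_le (by norm_num : (-1 : ℝ) ≤ 1),
    ← MeasureTheory.integral_Icc_eq_integral_Ioc,
    ← integral_indicator measurableSet_Icc]
  congr 1
  funext x
  by_cases hx : x ∈ Icc (-1 : ℝ) 1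
  · rw [Set.indicator_of_mem hx]
  · rw [Set.indicator_of_notMem hx, h x hx]

lemma gg_zero_of_not_Icc {x : ℝ} (hx : x ∉ Icc (-1 : ℝ) 1) : gg x = 0 := by
  apply gg_zero'
  rw [Set.mem_Icc, not_and_or, not_le, not_le] at hx
  rcases hx with h | h
  · exact Or.inl h.le
  · exact Or.inr h.le

lemma Jval :
    (∫ x, gg x * (Real.arcsin (x + 1) - Real.arcsin (x - 1)))
      = π ^ 2 / 2 + 2 * ∫ β in (0 : ℝ)..1, Real.arcsin (1 - β) / Real.sqrt (1 - β ^ 2) := by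
  have hpt : ∀ x : ℝ, gg x * (Real.arcsin (x + 1) - Real.arcsin (x - 1))
      = Real.arcsin (1 + x) * gg x + Real.arcsin (1 - x) * gg x := by
    intro x
    rw [show x - 1 = -(1 - x) by ring, Real.arcsin_neg, show x + 1 = 1 + x by ring]
    ring
  simp only [hpt]
  rw [integral_add h1_integrable h2_integrable]
  have hR1 : (∫ x, Real.arcsin (1 + x) * gg x)
      = ∫ x in (-1 : ℝ)..1, Real.arcsin (1 + x) * gg x := by
    apply restrict01
    intro x hx
    rw [gg_zero_of_not_Icc hx, mul_zero]
  have hR2 : (∫ x, Real.arcsin (1 - x) * gg x)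
      = ∫ x in (-1 : ℝ)..1, Real.arcsin (1 - x) * gg x := by
    apply restrict01
    intro x hx
    rw [gg_zero_of_not_Icc hx, mul_zero]
  have hJ1 : (∫ x in (-1 : ℝ)..1, Real.arcsin (1 + x) * gg x)
      = ∫ x in (-1 : ℝ)..1, Real.arcsin (1 - x) * gg x := by
    have h := intervalIntegral.integral_comp_neg (a := (-1 : ℝ)) (b := 1)
      (f := fun y => Real.arcsin (1 - y) * gg y)
    simp only [sub_neg_eq_add, gg_even, neg_neg] at h
    exact h
  rw [hR1, hR2, hJ1, ← two_mul]
  have hsplit : (∫ x in (-1 : ℝ)..1, Real.arcsin (1 - x) * gg x)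
      = (∫ x in (-1 : ℝ)..0, Real.arcsin (1 - x) * gg x)
        + ∫ x in (0 : ℝ)..1, Real.arcsin (1 - x) * gg x := by
    rw [intervalIntegral.integral_add_adjacent_intervals
      h2_integrable.intervalIntegrable h2_integrable.intervalIntegrable]
  have hleft : (∫ x in (-1 : ℝ)..0, Real.arcsin (1 - x) * gg x) = π ^ 2 / 4 := by
    rw [intervalIntegral.integral_congr (g := fun x => (π / 2) * gg x)
      (by
        intro t ht
        rw [Set.uIcc_of_le (by norm_num : (-1 : ℝ) ≤ 0)] at ht
        show Real.arcsin (1 - t) * gg t = (π / 2) * gg t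
        rw [Real.arcsin_of_one_le (by linarith [ht.2])])]
    rw [intervalIntegral.integral_const_mul, gg_integral (-1) 0 le_rfl (by norm_num)
      (by norm_num), Real.arcsin_zero, Real.arcsin_neg_one]
    ring
  have hright : (∫ x in (0 : ℝ)..1, Real.arcsin (1 - x) * gg x)
      = ∫ β in (0 : ℝ)..1, Real.arcsin (1 - β) / Real.sqrt (1 - β ^ 2) := by
    apply intervalIntegral.integral_congr
    intro t _
    show Real.arcsin (1 - t) * gg t = Real.arcsin (1 - t) / Real.sqrt (1 - t ^ 2)
    rw [gg, div_eq_mul_inv]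
  rw [hsplit, hleft, hright]
  ring

/-- The value of the double integral over the hexagonal region `A`. -/
theorem hexagon_integral_value :
    (∫ p in {p : ℝ × ℝ | |p.1| ≤ 1 ∧ |p.2| ≤ 1 ∧ |p.1 - p.2| ≤ 1},
        1 / (Real.sqrt (1 - p.1 ^ 2) * Real.sqrt (1 - p.2 ^ 2)))
      = Real.pi ^ 2 / 2
        + 2 * ∫ β in (0 : ℝ)..1, Real.arcsin (1 - β) / Real.sqrt (1 - β ^ 2) := by
  have hfun : ∀ p : ℝ × ℝ,
      1 / (Real.sqrt (1 - p.1 ^ 2) * Real.sqrt (1 - p.2 ^ 2)) = gg p.1 * gg p.2 := by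
    intro p; rw [one_div, mul_inv]; rfl
  simp only [hfun]
  have hS : MeasurableSet {p : ℝ × ℝ | |p.1| ≤ 1 ∧ |p.2| ≤ 1 ∧ |p.1 - p.2| ≤ 1} := by
    apply MeasurableSet.inter
      (measurableSet_le continuous_fst.abs.measurable measurable_const)
    exact MeasurableSet.inter
      (measurableSet_le continuous_snd.abs.measurable measurable_const)
      hT_meas
  have hST : (∫ p in {p : ℝ × ℝ | |p.1| ≤ 1 ∧ |p.2| ≤ 1 ∧ |p.1 - p.2| ≤ 1},
      gg p.1 * gg p.2) = ∫ p in {p : ℝ × ℝ | |p.1 - p.2| ≤ 1}, gg p.1 * gg p.2 := by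
    rw [← integral_indicator hS, ← integral_indicator hT_meas]
    congr 1
    funext p
    by_cases hp : p ∈ {p : ℝ × ℝ | |p.1| ≤ 1 ∧ |p.2| ≤ 1 ∧ |p.1 - p.2| ≤ 1}
    · rw [Set.indicator_of_mem hp, Set.indicator_of_mem (show p ∈ {p : ℝ × ℝ | |p.1 - p.2| ≤ 1} from hp.2.2)]
    · rw [Set.indicator_of_notMem hp]
      by_cases hq : p ∈ {p : ℝ × ℝ | |p.1 - p.2| ≤ 1}
      · rw [Set.indicator_of_mem hq]
        simp only [Set.mem_setOf_eq, not_and_or] at hp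
        rcases hp with h | h | h
        · rw [gg_zero (not_le.1 h).le, zero_mul]
        · rw [gg_zero (not_le.1 h).le, mul_zero]
        · exact absurd hq h
      · rw [Set.indicator_of_notMem hq]
  rw [hST, fubini_step, Jval]
end

section
/- For N ≥ 3 and integer q with N/4 < q < N/2, the q-twisted state θ_i = 2πqi/N on the cycle graph with unit weights is an unstable steady state of the Kuramoto model; specifically, cos(2πq/N) < 0, so the linearization around θ, given by the weighted graph Laplacian with edge weights cos(θ_e) = cos(2πq/N), has a negative eigenvalue. -/
/-- For `N/4 < q < N/2`, the `q`-twisted state on the cycle graph is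
unstable: `cos(2πq/N) < 0` and the weighted Laplacian with edge weights
`cos(2πq/N)` has a negative eigenvalue. -/
theorem twisted_state_unstable (N : ℕ) (hN : 3 ≤ N) (q : ℤ)
    (hq1 : (N : ℝ) / 4 < (q : ℝ)) (hq2 : (q : ℝ) < (N : ℝ) / 2)
    (L : Matrix (Fin N) (Fin N) ℝ)
    (hL : ∀ i j : Fin N, L i j =
      if i = j then 2 * Real.cos (2 * Real.pi * q / N)
      else if (i.val + 1) % N = j.val ∨ (j.val + 1) % N = i.val then
        -Real.cos (2 * Real.pi * q / N)
      else 0) :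
    Real.cos (2 * Real.pi * q / N) < 0 ∧
      ∃ (μ : ℝ) (x : Fin N → ℝ), x ≠ 0 ∧ μ < 0 ∧ L.mulVec x = μ • x := by
  have hπ := Real.pi_pos
  have hN0 : 0 < N := by omega
  have hNR : (0:ℝ) < N := by exact_mod_cast hN0
  set c := Real.cos (2 * Real.pi * q / N) with hc
  have hcneg : c < 0 := by
    rw [hc]
    apply Real.cos_neg_of_pi_div_two_lt_of_lt
    · rw [lt_div_iff₀ hNR]; nlinarith
    · rw [div_lt_iff₀ hNR]; nlinarith
  set a := 2 * Real.pi / N with ha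
  have haN : a * N = 2 * Real.pi := by rw [ha, div_mul_cancel₀ _ hNR.ne']
  have ha1 : Real.cos a < 1 := by
    have h0 : 0 < a := by positivity
    have hle : a < Real.pi := by
      rw [ha, div_lt_iff₀ hNR]
      have : (3:ℝ) ≤ N := by exact_mod_cast hN
      nlinarith
    have := Real.cos_lt_cos_of_nonneg_of_le_pi (le_refl 0) hle.le h0
    simpa using this
  set x : Fin N → ℝ := fun i => Real.cos (a * i.val) with hx
  set μ : ℝ := 2 * c * (1 - Real.cos a) with hμ
  have per : ∀ k : ℕ, Real.cos (a * ((k % N : ℕ) : ℝ)) = Real.cos (a * k) := by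
    intro k
    have hk := Nat.mod_add_div k N
    have hkR : (k : ℝ) = ((k % N : ℕ) : ℝ) + (N : ℝ) * ((k / N : ℕ) : ℝ) := by
      exact_mod_cast hk.symm
    have : a * k = a * ((k % N : ℕ) : ℝ) + (k / N : ℕ) * (2 * Real.pi) := by
      rw [hkR, ← haN]; ring
    rw [this, Real.cos_add_nat_mul_two_pi]
  refine ⟨hcneg, μ, x, ?_, ?_, ?_⟩
  · intro h
    have h0 : x ⟨0, hN0⟩ = 0 := by rw [h]; rfl
    simp [hx] at h0
  · nlinarith
  · funext i
    have hiN := i.isLt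
    set j1 : Fin N := ⟨(i.val + 1) % N, Nat.mod_lt _ hN0⟩ with hj1
    set j2 : Fin N := ⟨(i.val + (N - 1)) % N, Nat.mod_lt _ hN0⟩ with hj2
    have hj1v : j1.val = (i.val + 1) % N := rfl
    have hj2v : j2.val = (i.val + (N - 1)) % N := rfl
    have modred : ∀ m : ℕ, m < 2 * N → m % N = if m < N then m else m - N := by
      intro m hm
      rcases Nat.lt_or_ge m N with h | h
      · rw [if_pos h, Nat.mod_eq_of_lt h]
      · rw [if_neg (by omega)]
        calc m % N = ((m - N) + N) % N := by rw [Nat.sub_add_cancel h]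
          _ = (m - N) % N := Nat.add_mod_right _ _
          _ = m - N := Nat.mod_eq_of_lt (by omega)
    have hne1 : j1 ≠ i := by
      intro h
      have := congrArg Fin.val h
      rw [hj1v, modred _ (by omega)] at this; split_ifs at this <;> omega
    have hne2 : j2 ≠ i := by
      intro h
      have := congrArg Fin.val h
      rw [hj2v, modred _ (by omega)] at this; split_ifs at this <;> omega
    have hne12 : j1 ≠ j2 := by
      intro h
      have := congrArg Fin.val h
      rw [hj1v, hj2v, modred _ (by omega), modred _ (by omega)] at this
      split_ifs at this <;> omega
    have key : ∀ j : Fin N, L i j * x j =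
        (if j = i then 2 * c * x j else 0) +
        ((if j = j1 then -c * x j else 0) + (if j = j2 then -c * x j else 0)) := by
      intro j
      rw [hL]
      by_cases h1 : j = i
      · subst h1
        rw [if_pos rfl, if_pos rfl, if_neg (Ne.symm hne1), if_neg (Ne.symm hne2)]; ring
      · rw [if_neg (Ne.symm h1), if_neg h1]
        by_cases h2 : j = j1
        · subst h2
          rw [if_pos rfl, if_neg hne12]
          rw [if_pos (Or.inl rfl)]; ring
        · rw [if_neg h2]
          by_cases h3 : j = j2
          · subst h3
            rw [if_pos rfl]
            have : (j2.val + 1) % N = i.val := by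
              rw [hj2v, modred (i.val + (N - 1)) (by omega)]
              rw [modred _ (by split_ifs <;> omega)]
              split_ifs <;> omega
            rw [if_pos (Or.inr this)]; ring
          · rw [if_neg h3]
            rw [if_neg]
            · ring
            · rintro (h | h)
              · exact h2 (Fin.ext h.symm)
              · apply h3
                have hjN := j.isLt
                apply Fin.ext
                rw [hj2v, modred _ (by omega)]
                rw [modred _ (by omega)] at h
                split_ifs at h ⊢ <;> omega
    show ∑ j, L i j * x j = μ * x i
    rw [Finset.sum_congr rfl (fun j _ => key j)]
    rw [Finset.sum_add_distrib, Finset.sum_add_distrib,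
      Finset.sum_ite_eq' Finset.univ i, Finset.sum_ite_eq' Finset.univ j1,
      Finset.sum_ite_eq' Finset.univ j2]
    simp only [Finset.mem_univ, if_pos]
    have hx1 : x j1 = Real.cos (a * i.val + a) := by
      show Real.cos (a * ((((i.val + 1) % N : ℕ)) : ℝ)) = _
      rw [per]; push_cast; ring_nf
    have hx2 : x j2 = Real.cos (a * i.val - a) := by
      show Real.cos (a * ((((i.val + (N - 1)) % N : ℕ)) : ℝ)) = _
      rw [per]
      have : (((i.val + (N - 1) : ℕ)) : ℝ) = (i.val : ℝ) - 1 + N := by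
        push_cast [Nat.cast_sub (by omega : 1 ≤ N)]; ring
      rw [this]
      have : a * ((i.val : ℝ) - 1 + N) = (a * i.val - a) + 2 * Real.pi := by
        rw [mul_add, haN]; ring
      rw [this, Real.cos_add_two_pi]
    rw [hx1, hx2, Real.cos_add, Real.cos_sub]
    show 2 * c * x i + _ = μ * x i
    simp only [hx, hμ]
    ring
end

section
/- For the q-twisted state on the cycle graph C_N with unit weights, the eigenvalues of the Jacobian of the Kuramoto vector field at this state are λ_k = -2 cos(2πq/N)(1 - cos(2πk/N)) for k = 0, 1, ..., N-1. Consequently the q-twisted state is linearly stable (all nonzero eigenvalues negative) if and only if cos(2πq/N) > 0 (for N ≥ 3). -/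
open Complex


lemma aux_e_succ (N k a : ℕ) :
    Complex.exp (2 * Real.pi * Complex.I * k * ((a + 1 : ℕ) : ℂ) / N)
      = Complex.exp (2 * Real.pi * Complex.I * k * a / N)
        * Complex.exp (2 * Real.pi * Complex.I * k / N) := by
  rw [← Complex.exp_add]
  congr 1
  push_cast
  ring

lemma aux_e_mod (N k a : ℕ) (hN : 0 < N) :
    Complex.exp (2 * Real.pi * Complex.I * k * ((a % N : ℕ) : ℂ) / N)
      = Complex.exp (2 * Real.pi * Complex.I * k * a / N) := by
  have hNC : (N:ℂ) ≠ 0 := Nat.cast_ne_zero.2 hN.ne'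
  conv_rhs => rw [← Nat.mod_add_div a N]
  generalize a % N = r
  generalize a / N = d
  rw [show (2 * Real.pi * Complex.I * k * ((r + N * d : ℕ) : ℂ) / N : ℂ)
      = 2 * Real.pi * Complex.I * k * (r : ℂ) / N
        + ((k * d : ℕ) : ℤ) * (2 * Real.pi * Complex.I) from by
    push_cast; field_simp]
  rw [Complex.exp_add, Complex.exp_int_mul_two_pi_mul_I, mul_one]

lemma aux_omega_sum (xk : ℝ) :
    Complex.exp ((xk : ℂ) * Complex.I) + (Complex.exp ((xk : ℂ) * Complex.I))⁻¹
      = 2 * (Real.cos xk : ℂ) := by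
  rw [← Complex.exp_neg]
  rw [show -((xk:ℂ) * Complex.I) = (-xk : ℂ) * Complex.I from by ring]
  rw [Complex.exp_mul_I, Complex.exp_mul_I, Complex.cos_neg, Complex.sin_neg,
    Complex.ofReal_cos]
  ring
/-- The Jacobian of the Kuramoto field at the `q`-twisted state on
`C_N` is diagonalized by the discrete Fourier basis with eigenvalues
`λ_k = -2cos(2πq/N)(1 - cos(2πk/N))`; all nonzero-mode eigenvalues are negative
iff `cos(2πq/N) > 0`. -/
theorem twisted_state_jacobian_spectrum (N : ℕ) (hN : 3 ≤ N) (q : ℤ)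
    (J : Matrix (Fin N) (Fin N) ℝ)
    (hJ : ∀ i j : Fin N, J i j =
      if i = j then -2 * Real.cos (2 * Real.pi * q / N)
      else if (i.val + 1) % N = j.val ∨ (j.val + 1) % N = i.val then
        Real.cos (2 * Real.pi * q / N)
      else 0) :
    (∀ k : Fin N,
      (J.map (fun t : ℝ => (t : ℂ))).mulVec
          (fun j : Fin N => Complex.exp (2 * Real.pi * Complex.I * k.val * j.val / N))
        = fun j : Fin N =>
            ((-2 * Real.cos (2 * Real.pi * q / N) * (1 - Real.cos (2 * Real.pi * k.val / N)) : ℝ) : ℂ)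
              * Complex.exp (2 * Real.pi * Complex.I * k.val * j.val / N)) ∧
    ((∀ k : Fin N, k.val ≠ 0 →
        -2 * Real.cos (2 * Real.pi * q / N) * (1 - Real.cos (2 * Real.pi * k.val / N)) < 0)
      ↔ 0 < Real.cos (2 * Real.pi * q / N)) := by
  haveI : NeZero N := ⟨by omega⟩
  have hNpos : (0:ℝ) < N := by positivity
  set c : ℝ := Real.cos (2 * Real.pi * q / N) with hc
  have coslt : ∀ x : ℝ, 0 < x → x < 2 * Real.pi → Real.cos x < 1 := by
    intro x hx hx2
    rcases lt_or_eq_of_le (Real.cos_le_one x) with h | h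
    · exact h
    · exact absurd ((Real.cos_eq_one_iff_of_lt_of_lt (by linarith) hx2).1 h) (by linarith)
  have hone : (1 : Fin N).val = 1 := by
    rw [Fin.val_one']; exact Nat.mod_eq_of_lt (by omega)
  have hone0 : (1 : Fin N) ≠ 0 := by
    intro h
    have := congrArg Fin.val h
    rw [hone, Fin.val_zero] at this
    exact one_ne_zero this
  constructor
  · intro k
    set xk : ℝ := 2 * Real.pi * k.val / N with hxk
    set e : ℕ → ℂ := fun a : ℕ => Complex.exp (2 * Real.pi * Complex.I * k.val * a / N)
      with he
    set ω : ℂ := Complex.exp (2 * Real.pi * Complex.I * k.val / N) with hω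
    have hωne : ω ≠ 0 := Complex.exp_ne_zero _
    have e_succ : ∀ a : ℕ, e (a + 1) = e a * ω := fun a => aux_e_succ N k.val a
    have e_mod : ∀ a : ℕ, e (a % N) = e a := fun a => aux_e_mod N k.val a (by omega)
    have hω2 : ω + ω⁻¹ = 2 * (Real.cos xk : ℂ) := by
      have h1 : ω = Complex.exp ((xk : ℂ) * Complex.I) := by
        rw [hω]; congr 1; rw [hxk]; push_cast; ring
      rw [h1, aux_omega_sum]
    funext j
    -- distinctness facts
    have h1 : j + 1 ≠ j := by
      intro h
      have h' : j + 1 = j + 0 := by rw [add_zero]; exact h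
      exact hone0 (add_left_cancel h')
    have h2 : j - 1 ≠ j := by
      intro h
      exact hone0 (sub_eq_self.mp h)
    have h3 : j + 1 ≠ j - 1 := by
      intro h
      have h' : j + (1 + 1) = j + 0 := by
        rw [← add_assoc, add_zero, h, sub_add_cancel]
      have h0 : (1 : Fin N) + 1 = 0 := add_left_cancel h'
      have hval : ((1 : Fin N) + 1).val = 0 := by rw [h0, Fin.val_zero]
      rw [Fin.val_add, hone, Nat.mod_eq_of_lt (by omega)] at hval
      omega
    -- neighbor condition characterization
    have hsucc : ∀ a b : Fin N, ((a.val + 1) % N = b.val) ↔ a + 1 = b := by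
      intro a b
      rw [Fin.ext_iff, Fin.val_add, hone]
    have hmm : ∀ a b : Fin N, (a + 1 = b) ↔ a = b - 1 := fun a b =>
      (eq_sub_iff_add_eq).symm
    -- the sum
    show (∑ i, (fun t : ℝ => (t:ℂ)) (J j i) * e i.val) = _
    have key : ∀ i : Fin N, ((J j i : ℝ) : ℂ) * e i.val
        = (-2*(c:ℂ)) * (if i = j then e i.val else 0)
          + (c:ℂ) * (if i = j + 1 then e i.val else 0)
          + (c:ℂ) * (if i = j - 1 then e i.val else 0) := by
      intro i
      rw [hJ]
      by_cases hij : j = i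
      · subst hij
        rw [if_pos rfl, if_pos rfl, if_neg (fun h => h1 h.symm),
          if_neg (fun h => h2 h.symm)]
        push_cast; ring
      · rw [if_neg hij, if_neg (show ¬ (i = j) from fun h => hij h.symm)]
        by_cases hp : i = j + 1
        · have hcond : (j.val + 1) % N = i.val ∨ (i.val + 1) % N = j.val :=
            Or.inl ((hsucc j i).mpr hp.symm)
          rw [if_pos hcond, if_pos hp,
            if_neg (show ¬ i = j - 1 from fun h => h3 (hp.symm.trans h))]
          push_cast; ring
        · by_cases hm : i = j - 1
          · have hcond : (j.val + 1) % N = i.val ∨ (i.val + 1) % N = j.val :=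
              Or.inr ((hsucc i j).mpr ((hmm i j).mpr hm))
            rw [if_pos hcond, if_neg hp, if_pos hm]
            push_cast; ring
          · have hcond : ¬((j.val + 1) % N = i.val ∨ (i.val + 1) % N = j.val) := by
              rintro (h | h)
              · exact hp ((hsucc j i).mp h).symm
              · exact hm ((hmm i j).mp ((hsucc i j).mp h))
            rw [if_neg hcond, if_neg hp, if_neg hm]
            push_cast; ring
    rw [Finset.sum_congr rfl (fun i _ => key i)]
    rw [Finset.sum_add_distrib, Finset.sum_add_distrib, ← Finset.mul_sum, ← Finset.mul_sum,
      ← Finset.mul_sum, Finset.sum_ite_eq', Finset.sum_ite_eq', Finset.sum_ite_eq']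
    simp only [Finset.mem_univ, if_pos]
    -- values at neighbors
    have vp : e (j + 1 : Fin N).val = e j.val * ω := by
      rw [Fin.val_add, hone, e_mod, e_succ]
    have hval : (j - 1 : Fin N).val = (N - 1 + j.val) % N := by
      rw [Fin.sub_def, hone]
    have vm' : e (j - 1 : Fin N).val * ω = e j.val := by
      rw [hval, e_mod, ← e_succ, show N - 1 + j.val + 1 = j.val + N from by omega,
        ← e_mod (j.val + N), Nat.add_mod_right, Nat.mod_eq_of_lt j.isLt]
    have vm : e (j - 1 : Fin N).val = e j.val * ω⁻¹ := by
      rw [← vm']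
      field_simp
    rw [vp, vm]
    have hmain : (-2*(c:ℂ)) * e j.val + (c:ℂ) * (e j.val * ω) + (c:ℂ) * (e j.val * (ω⁻¹))
        = (c:ℂ) * e j.val * (ω + ω⁻¹) + (-2*(c:ℂ)) * e j.val := by ring
    rw [hmain, hω2]
    simp only [he]
    push_cast
    ring
  · constructor
    · intro h
      have := h ⟨1, by omega⟩ (by simp)
      have hx : Real.cos (2 * Real.pi * ((1:ℕ):ℝ) / N) < 1 := by
        apply coslt
        · have := Real.pi_pos; positivity
        · rw [div_lt_iff₀ hNpos]
          push_cast
          nlinarith [Real.pi_pos, (show (3:ℝ) ≤ N by exact_mod_cast hN)]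
      simp only [Fin.val_mk] at this
      push_cast at this hx
      nlinarith
    · intro hcpos k hk
      have hk1 : (1:ℝ) ≤ (k.val : ℝ) := by exact_mod_cast Nat.one_le_iff_ne_zero.2 hk
      have hkN : (k.val : ℝ) < N := by exact_mod_cast k.isLt
      have hx : Real.cos (2 * Real.pi * k.val / N) < 1 := by
        apply coslt
        · have := Real.pi_pos; positivity
        · rw [div_lt_iff₀ hNpos]
          nlinarith [Real.pi_pos]
      nlinarith
end

section
/- Let G be a cycle graph with n edges and positive weights γ_e. Suppose θ is a steady state with sin(θ_e) = α/γ_e for all e, where α ≥ 0, and suppose the winding sum Σ_e θ_e (with each θ_e chosen in [0, 2π)) exceeds max_e { s_-(α/γ_e) + Σ_{e' ≠ e} s_+(α/γ_{e'}) }, where s_+(x) ∈ (0, π/2) and s_-(x) ∈ (π/2, π) are the two solutions of sin t = x for x ∈ (0, 1). Then at least two edges satisfy cos(θ_e) < 0. -/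
open Real Set

/-- On a cycle graph with positive weights, if a steady state with
`sin (θ e) = α / γ e`, `θ e ∈ [0, 2π)`, has winding sum exceeding
`s₋(α/γ_e) + ∑_{e'≠e} s₊(α/γ_{e'})` for every edge `e` (where `s₊, s₋` are the two
branches of `arcsin`), then at least two edges have `cos (θ e) < 0`. -/
theorem winding_forces_two_negative_cosines (n : ℕ) (hn : 0 < n)
    (γ : Fin n → ℝ) (hγ : ∀ e, 0 < γ e)
    (α : ℝ) (hα : 0 ≤ α) (hαγ : ∀ e, α / γ e ∈ Ioo (0 : ℝ) 1)
    (sp sm : Fin n → ℝ)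
    (hsp : ∀ e, sp e ∈ Ioo 0 (π / 2) ∧ Real.sin (sp e) = α / γ e)
    (hsm : ∀ e, sm e ∈ Ioo (π / 2) π ∧ Real.sin (sm e) = α / γ e)
    (θ : Fin n → ℝ)
    (hθ : ∀ e, θ e ∈ Ico (0 : ℝ) (2 * π))
    (hsin : ∀ e, Real.sin (θ e) = α / γ e)
    (hsum : ∀ e₀ : Fin n,
      sm e₀ + ∑ e' ∈ Finset.univ.erase e₀, sp e' < ∑ e : Fin n, θ e) :
    ∃ e₁ e₂ : Fin n, e₁ ≠ e₂ ∧ Real.cos (θ e₁) < 0 ∧ Real.cos (θ e₂) < 0 := by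
  have hπ := Real.pi_pos
  have hdich : ∀ e, θ e = sp e ∨ θ e = sm e := by
    intro e
    obtain ⟨⟨hsp1, hsp2⟩, hsp3⟩ := hsp e
    obtain ⟨⟨hsm1, hsm2⟩, hsm3⟩ := hsm e
    obtain ⟨hθ1, hθ2⟩ := hθ e
    obtain ⟨hx1, hx2⟩ := hαγ e
    have hsinθ : Real.sin (θ e) = α / γ e := hsin e
    have hpos : 0 < Real.sin (θ e) := by rw [hsinθ]; exact hx1
    have h0 : 0 < θ e := by
      rcases lt_or_eq_of_le hθ1 with h | h
      · exact h
      · rw [← h] at hpos; simp at hpos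
    have hπθ : θ e < π := by
      by_contra h
      push_neg at h
      have : Real.sin (θ e - 2 * π) ≤ 0 :=
        Real.sin_nonpos_of_nonpos_of_neg_pi_le (by linarith) (by linarith)
      rw [Real.sin_sub_two_pi] at this; linarith
    rcases le_or_gt (θ e) (π / 2) with hc | hc
    · left
      exact Real.injOn_sin ⟨by linarith, by linarith⟩ ⟨by linarith, by linarith⟩
        (by rw [hsinθ, hsp3])
    · right
      have := Real.injOn_sin (show π - θ e ∈ Icc (-(π/2)) (π/2) from ⟨by linarith, by linarith⟩)
        (show π - sm e ∈ Icc (-(π/2)) (π/2) from ⟨by linarith, by linarith⟩)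
        (by rw [Real.sin_pi_sub, Real.sin_pi_sub, hsinθ, hsm3])
      linarith
  have hcossp : ∀ e, 0 < Real.cos (sp e) := fun e =>
    Real.cos_pos_of_mem_Ioo ⟨by have := (hsp e).1.1; linarith, (hsp e).1.2⟩
  have hcossm : ∀ e, Real.cos (sm e) < 0 := fun e =>
    Real.cos_neg_of_pi_div_two_lt_of_lt (hsm e).1.1 (by have := (hsm e).1.2; linarith)
  by_contra hcon
  push_neg at hcon
  by_cases hex : ∃ e, Real.cos (θ e) < 0
  · obtain ⟨e₀, he₀⟩ := hex
    have hsp_eq : ∀ e ∈ Finset.univ.erase e₀, θ e = sp e := by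
      intro e he
      have hne : e₀ ≠ e := fun h => (Finset.mem_erase.mp he).1 h.symm
      have hge : ¬ Real.cos (θ e) < 0 := not_lt.mpr (hcon e₀ e hne he₀)
      rcases hdich e with h | h
      · exact h
      · exact absurd (h ▸ hcossm e) hge
    have hθe₀ : θ e₀ = sm e₀ := by
      rcases hdich e₀ with h | h
      · rw [h] at he₀; exact absurd he₀ (not_lt.mpr (hcossp e₀).le)
      · exact h
    have hsum_eq : ∑ e : Fin n, θ e = sm e₀ + ∑ e' ∈ Finset.univ.erase e₀, sp e' := by
      rw [← Finset.add_sum_erase _ θ (Finset.mem_univ e₀), hθe₀,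
        Finset.sum_congr rfl hsp_eq]
    have := hsum e₀
    rw [hsum_eq] at this
    exact lt_irrefl _ this
  · push_neg at hex
    have hall : ∀ e, θ e = sp e := by
      intro e
      rcases hdich e with h | h
      · exact h
      · exact absurd (h ▸ hcossm e) (not_lt.mpr (hex e))
    set e₀ : Fin n := ⟨0, hn⟩
    have h1 := hsum e₀
    rw [Finset.sum_congr rfl (fun e _ => hall e),
      ← Finset.add_sum_erase _ sp (Finset.mem_univ e₀)] at h1
    have h2 : sp e₀ < sm e₀ := by
      have := (hsp e₀).1.2; have := (hsm e₀).1.1; linarith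
    linarith
end
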